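/- arXiv:math-ph/0604021 — 9 statements merged into one kernel-verified Lean document; each statement's English description precedes it below -/
import Mathlib

section
/- Let a, b, c₁, c₂, c₃ be real constants with b ≠ 0. Define, on the domain {(t,x) : t ≠ −a}, u₀(t,x) = (b − x)/(t + a) and u₁(t,x) = (c₁/(t + a))·exp((b − x)/(t + a)) + c₃x/(b(t + a)²) + (c₂(t + a) − c₃)/(t + a)². Then ∂u₀/∂t = u₀·∂u₀/∂x and ∂u₁/∂t = u₀·∂u₁/∂x + u₁·∂u₀/∂x + ∂³u₀/∂x³ at every point of the domain; that is, u = u₀ + ε u₁ solves the KdV equation u_t = u u_x + ε u_xxx up to terms of order ε². -/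
/-- Partial derivative in `t` of a function `u : ℝ → ℝ → ℝ`, `u = u t x`. -/
noncomputable def ptderiv (u : ℝ → ℝ → ℝ) : ℝ → ℝ → ℝ :=
  fun t x => deriv (fun s => u s x) t

/-- Partial derivative in `x` of a function `u : ℝ → ℝ → ℝ`, `u = u t x`. -/
noncomputable def pxderiv (u : ℝ → ℝ → ℝ) : ℝ → ℝ → ℝ :=
  fun t x => deriv (fun y => u t y) x

/-- The pair `u₀ = (b-x)/(t+a)`,
`u₁ = (c₁/(t+a)) e^{(b-x)/(t+a)} + c₃ x/(b(t+a)²) + (c₂(t+a) - c₃)/(t+a)²`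
solves the KdV equation `u_t = u u_x + ε u_xxx` up to terms of order `ε²`:
`∂u₀/∂t = u₀ ∂u₀/∂x` and `∂u₁/∂t = u₀ ∂u₁/∂x + u₁ ∂u₀/∂x + ∂³u₀/∂x³` on `{t ≠ -a}`. -/
theorem stmt5 (a b c₁ c₂ c₃ : ℝ) (hb : b ≠ 0) :
    let u₀ : ℝ → ℝ → ℝ := fun t x => (b - x) / (t + a)
    let u₁ : ℝ → ℝ → ℝ := fun t x =>
      c₁ / (t + a) * Real.exp ((b - x) / (t + a)) + c₃ * x / (b * (t + a) ^ 2)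
        + (c₂ * (t + a) - c₃) / (t + a) ^ 2
    ∀ t x : ℝ, t ≠ -a →
      ptderiv u₀ t x = u₀ t x * pxderiv u₀ t x ∧
      ptderiv u₁ t x
        = u₀ t x * pxderiv u₁ t x + u₁ t x * pxderiv u₀ t x
          + pxderiv (pxderiv (pxderiv u₀)) t x := by
  intro u₀ u₁ t x ht
  have hs : t + a ≠ 0 := fun h => ht (by linarith)
  have hs2 : (t + a) ^ 2 ≠ 0 := pow_ne_zero 2 hs
  have hid : HasDerivAt (fun s : ℝ => s + a) 1 t := (hasDerivAt_id t).add_const a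
  -- x-derivative of u₀ (for any point y, any t with same t fixed)
  have hx0 : ∀ y : ℝ, deriv (fun z => (b - z) / (t + a)) y = -(t + a)⁻¹ := by
    intro y
    have h : HasDerivAt (fun z : ℝ => (b - z) / (t + a)) ((0 - 1) / (t + a)) y :=
      ((hasDerivAt_const y b).sub (hasDerivAt_id y)).div_const _
    rw [h.deriv]
    field_simp
    norm_num
  -- third x-derivative of u₀ vanishes
  have hthird : pxderiv (pxderiv (pxderiv u₀)) t x = 0 := by
    have e1 : (fun z => pxderiv u₀ t z) = fun _ : ℝ => -(t + a)⁻¹ := by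
      funext z
      exact hx0 z
    have e2 : (fun y => pxderiv (pxderiv u₀) t y) = fun _ : ℝ => (0 : ℝ) := by
      funext y
      show deriv (fun z => pxderiv u₀ t z) y = 0
      rw [e1]
      exact deriv_const y _
    show deriv (fun y => pxderiv (pxderiv u₀) t y) x = 0
    rw [e2]
    exact deriv_const x _
  -- t-derivative of u₀
  have ht0 : HasDerivAt (fun s => (b - x) / (s + a))
      ((0 * (t + a) - (b - x) * 1) / (t + a) ^ 2) t :=
    (hasDerivAt_const t (b - x)).div hid hs
  constructor
  · show deriv (fun s => (b - x) / (s + a)) t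
      = (b - x) / (t + a) * deriv (fun y => (b - y) / (t + a)) x
    rw [ht0.deriv, hx0 x]
    field_simp
    ring
  · -- t-derivative of u₁
    have h1 : HasDerivAt (fun s => c₁ / (s + a)) ((0 * (t + a) - c₁ * 1) / (t + a) ^ 2) t :=
      (hasDerivAt_const t c₁).div hid hs
    have h3 : HasDerivAt (fun s => Real.exp ((b - x) / (s + a)))
        (Real.exp ((b - x) / (t + a)) * ((0 * (t + a) - (b - x) * 1) / (t + a) ^ 2)) t :=
      ht0.exp
    have h4 := h1.mul h3
    have hbne : b * (t + a) ^ 2 ≠ 0 := mul_ne_zero hb hs2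
    have h6 : HasDerivAt (fun s => c₃ * x / (b * (s + a) ^ 2))
        ((0 * (b * (t + a) ^ 2) - c₃ * x * (b * (2 * (t + a) ^ 1 * 1))) / (b * (t + a) ^ 2) ^ 2)
        t :=
      (hasDerivAt_const t (c₃ * x)).div ((hid.pow 2).const_mul b) hbne
    have h8 : HasDerivAt (fun s => (c₂ * (s + a) - c₃) / (s + a) ^ 2)
        ((c₂ * 1 * (t + a) ^ 2 - (c₂ * (t + a) - c₃) * (2 * (t + a) ^ 1 * 1)) / ((t + a) ^ 2) ^ 2)
        t :=
      ((hid.const_mul c₂).sub_const c₃).div (hid.pow 2) hs2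
    have htot : HasDerivAt (fun s => c₁ / (s + a) * Real.exp ((b - x) / (s + a))
          + c₃ * x / (b * (s + a) ^ 2) + (c₂ * (s + a) - c₃) / (s + a) ^ 2) _ t :=
      (h4.add h6).add h8
    -- x-derivative of u₁
    have g2 : HasDerivAt (fun y => (b - y) / (t + a)) ((0 - 1) / (t + a)) x :=
      ((hasDerivAt_const x b).sub (hasDerivAt_id x)).div_const _
    have g4 : HasDerivAt (fun y => c₁ / (t + a) * Real.exp ((b - y) / (t + a)))
        (c₁ / (t + a) * (Real.exp ((b - x) / (t + a)) * ((0 - 1) / (t + a)))) x :=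
      g2.exp.const_mul _
    have g5 : HasDerivAt (fun y => c₃ * y / (b * (t + a) ^ 2))
        (c₃ * 1 / (b * (t + a) ^ 2)) x :=
      ((hasDerivAt_id x).const_mul c₃).div_const _
    have g6 : HasDerivAt (fun _ : ℝ => (c₂ * (t + a) - c₃) / (t + a) ^ 2) 0 x :=
      hasDerivAt_const x _
    have gtot : HasDerivAt (fun y => c₁ / (t + a) * Real.exp ((b - y) / (t + a))
          + c₃ * y / (b * (t + a) ^ 2) + (c₂ * (t + a) - c₃) / (t + a) ^ 2) _ x :=
      (g4.add g5).add g6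
    rw [hthird]
    show deriv (fun s => c₁ / (s + a) * Real.exp ((b - x) / (s + a))
          + c₃ * x / (b * (s + a) ^ 2) + (c₂ * (s + a) - c₃) / (s + a) ^ 2) t
        = (b - x) / (t + a)
            * deriv (fun y => c₁ / (t + a) * Real.exp ((b - y) / (t + a))
                + c₃ * y / (b * (t + a) ^ 2) + (c₂ * (t + a) - c₃) / (t + a) ^ 2) x
          + (c₁ / (t + a) * Real.exp ((b - x) / (t + a)) + c₃ * x / (b * (t + a) ^ 2)
              + (c₂ * (t + a) - c₃) / (t + a) ^ 2) * deriv (fun y => (b - y) / (t + a)) x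
          + 0
    rw [htot.deriv, gtot.deriv, hx0 x]
    field_simp
    ring
end

section
/- Let u : Ω → ℝ be a C⁴ function on an open set Ω ⊆ ℝ² satisfying the transport equation ∂u/∂t = u·∂u/∂x on Ω. Set η(t,x) = u_x·u_xxx − 3·u_xx², evaluated along u. Then the determining expression satisfies the identity ∂_t η − u_x·η − u·∂_x η = 4·u_x·η on Ω. In particular, it vanishes at every point where the constraint η = 0 holds, so η = u_x u_xxx − 3u_xx² is a nonclassical Lie–Bäcklund symmetry of the transport equation. -/
open Function Filter

lemma pt_fderiv {G : ℝ × ℝ → ℝ} {t x : ℝ} (h : DifferentiableAt ℝ G (t, x)) :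
    deriv (fun s => G (s, x)) t = fderiv ℝ G (t, x) (1, 0) := by
  have hg : HasDerivAt (fun s : ℝ => ((s, x) : ℝ × ℝ)) (1, 0) t :=
    (hasDerivAt_id t).prodMk (hasDerivAt_const t x)
  exact (h.hasFDerivAt.comp_hasDerivAt t hg).deriv

lemma px_fderiv {G : ℝ × ℝ → ℝ} {t x : ℝ} (h : DifferentiableAt ℝ G (t, x)) :
    deriv (fun y => G (t, y)) x = fderiv ℝ G (t, x) (0, 1) := by
  have hg : HasDerivAt (fun y : ℝ => ((t, y) : ℝ × ℝ)) (0, 1) x :=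
    (hasDerivAt_const x t).prodMk (hasDerivAt_id x)
  exact (h.hasFDerivAt.comp_hasDerivAt x hg).deriv

lemma fderiv_fderiv_apply {G : ℝ × ℝ → ℝ} {q : ℝ × ℝ}
    (h : DifferentiableAt ℝ (fderiv ℝ G) q) (v w : ℝ × ℝ) :
    fderiv ℝ (fun r => fderiv ℝ G r v) q w = fderiv ℝ (fderiv ℝ G) q w v := by
  have h1 : HasFDerivAt (fun r => fderiv ℝ G r v)
      ((ContinuousLinearMap.apply ℝ ℝ v).comp (fderiv ℝ (fderiv ℝ G) q)) q :=
    (ContinuousLinearMap.apply ℝ ℝ v).hasFDerivAt.comp q h.hasFDerivAt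
  rw [h1.fderiv]; rfl

lemma fderiv_mul_apply {f g : ℝ × ℝ → ℝ} {q : ℝ × ℝ}
    (hf : DifferentiableAt ℝ f q) (hg : DifferentiableAt ℝ g q) (v : ℝ × ℝ) :
    fderiv ℝ (fun r => f r * g r) q v
      = f q * fderiv ℝ g q v + fderiv ℝ f q v * g q := by
  rw [fderiv_fun_mul hf hg]
  simp [smul_eq_mul, mul_comm]

noncomputable def Dx (G : ℝ × ℝ → ℝ) : ℝ × ℝ → ℝ := fun r => fderiv ℝ G r (0, 1)
noncomputable def Dt (G : ℝ × ℝ → ℝ) : ℝ × ℝ → ℝ := fun r => fderiv ℝ G r (1, 0)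

lemma Dx_congr {f g : ℝ × ℝ → ℝ} {q : ℝ × ℝ} (h : f =ᶠ[nhds q] g) : Dx f q = Dx g q := by
  simp only [Dx, h.fderiv_eq]

lemma Dx_mul {f g : ℝ × ℝ → ℝ} {q : ℝ × ℝ}
    (hf : DifferentiableAt ℝ f q) (hg : DifferentiableAt ℝ g q) :
    Dx (fun r => f r * g r) q = f q * Dx g q + Dx f q * g q := fderiv_mul_apply hf hg _
lemma Dt_mul {f g : ℝ × ℝ → ℝ} {q : ℝ × ℝ}
    (hf : DifferentiableAt ℝ f q) (hg : DifferentiableAt ℝ g q) :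
    Dt (fun r => f r * g r) q = f q * Dt g q + Dt f q * g q := fderiv_mul_apply hf hg _

lemma Dx_sub {f g : ℝ × ℝ → ℝ} {q : ℝ × ℝ}
    (hf : DifferentiableAt ℝ f q) (hg : DifferentiableAt ℝ g q) :
    Dx (fun r => f r - g r) q = Dx f q - Dx g q := by
  simp only [Dx, fderiv_fun_sub hf hg]; simp
lemma Dt_sub {f g : ℝ × ℝ → ℝ} {q : ℝ × ℝ}
    (hf : DifferentiableAt ℝ f q) (hg : DifferentiableAt ℝ g q) :
    Dt (fun r => f r - g r) q = Dt f q - Dt g q := by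
  simp only [Dt, fderiv_fun_sub hf hg]; simp
lemma Dx_add {f g : ℝ × ℝ → ℝ} {q : ℝ × ℝ}
    (hf : DifferentiableAt ℝ f q) (hg : DifferentiableAt ℝ g q) :
    Dx (fun r => f r + g r) q = Dx f q + Dx g q := by
  simp only [Dx, fderiv_fun_add hf hg]; simp
lemma Dx_const_mul {f : ℝ × ℝ → ℝ} {q : ℝ × ℝ} (c : ℝ)
    (hf : DifferentiableAt ℝ f q) :
    Dx (fun r => c * f r) q = c * Dx f q := by
  simp only [Dx, fderiv_const_mul hf]; simp
lemma Dt_const_mul {f : ℝ × ℝ → ℝ} {q : ℝ × ℝ} (c : ℝ)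
    (hf : DifferentiableAt ℝ f q) :
    Dt (fun r => c * f r) q = c * Dt f q := by
  simp only [Dt, fderiv_const_mul hf]; simp

lemma clairaut' {G : ℝ × ℝ → ℝ} {q : ℝ × ℝ} (hG : ContDiffAt ℝ 2 G q) :
    Dt (Dx G) q = Dx (Dt G) q := by
  have hd : DifferentiableAt ℝ (fderiv ℝ G) q :=
    (hG.fderiv_right (m := 1) (by norm_num)).differentiableAt (by norm_num)
  show fderiv ℝ (fun r => fderiv ℝ G r (0,1)) q (1,0)
      = fderiv ℝ (fun r => fderiv ℝ G r (1,0)) q (0,1)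
  rw [fderiv_fderiv_apply hd, fderiv_fderiv_apply hd,
    (hG.isSymmSndFDerivAt (by norm_num)).eq]

lemma contDiffAt_Dx {G : ℝ × ℝ → ℝ} {q : ℝ × ℝ} {n : ℕ∞} (h : ContDiffAt ℝ (n + 1) G q) :
    ContDiffAt ℝ n (Dx G) q :=
  (h.fderiv_right le_rfl).clm_apply contDiffAt_const

/-- For any C⁴ solution of `u_t = u u_x` on an open set `Ω`, the characteristic
`η = u_x u_xxx - 3 u_xx²` evaluated along `u` satisfies the identity
`∂_t η - u_x η - u ∂_x η = 4 u_x η`; in particular the determining expression vanishes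
wherever the constraint `η = 0` holds, so `η = u_x u_xxx - 3 u_xx²` is a nonclassical
Lie–Bäcklund symmetry of the transport equation. -/
theorem stmt7 (u : ℝ → ℝ → ℝ) (Ω : Set (ℝ × ℝ)) (hΩ : IsOpen Ω)
    (hu : ContDiffOn ℝ 4 (Function.uncurry u) Ω)
    (heq : ∀ t x : ℝ, (t, x) ∈ Ω → ptderiv u t x = u t x * pxderiv u t x) :
    let η : ℝ → ℝ → ℝ := fun t x =>
      pxderiv u t x * pxderiv (pxderiv (pxderiv u)) t x - 3 * (pxderiv (pxderiv u) t x) ^ 2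
    ∀ t x : ℝ, (t, x) ∈ Ω →
      ptderiv η t x - pxderiv u t x * η t x - u t x * pxderiv η t x
          = 4 * pxderiv u t x * η t x ∧
      (η t x = 0 →
        ptderiv η t x - pxderiv u t x * η t x - u t x * pxderiv η t x = 0) := by
  intro η t x hp
  set F : ℝ × ℝ → ℝ := Function.uncurry u with hFdef
  -- smoothness facts
  have hC : ∀ q ∈ Ω, ContDiffAt ℝ 4 F q := fun q hq => hu.contDiffAt (hΩ.mem_nhds hq)
  have hC1 : ∀ q ∈ Ω, ContDiffAt ℝ 3 (Dx F) q := fun q hq =>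
    contDiffAt_Dx (n := 3) ((hC q hq).of_le (by norm_num))
  have hC2 : ∀ q ∈ Ω, ContDiffAt ℝ 2 (Dx (Dx F)) q := fun q hq =>
    contDiffAt_Dx (n := 2) ((hC1 q hq).of_le (by norm_num))
  have hC3 : ∀ q ∈ Ω, ContDiffAt ℝ 1 (Dx (Dx (Dx F))) q := fun q hq =>
    contDiffAt_Dx (n := 1) ((hC2 q hq).of_le (by norm_num))
  have hd0 : ∀ q ∈ Ω, DifferentiableAt ℝ F q := fun q hq =>
    (hC q hq).differentiableAt (by norm_num)
  have hd1 : ∀ q ∈ Ω, DifferentiableAt ℝ (Dx F) q := fun q hq =>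
    (hC1 q hq).differentiableAt (by norm_num)
  have hd2 : ∀ q ∈ Ω, DifferentiableAt ℝ (Dx (Dx F)) q := fun q hq =>
    (hC2 q hq).differentiableAt (by norm_num)
  have hd3 : ∀ q ∈ Ω, DifferentiableAt ℝ (Dx (Dx (Dx F))) q := fun q hq =>
    (hC3 q hq).differentiableAt (by norm_num)
  -- neighborhood facts
  have hmemx : ∀ a b : ℝ, (a, b) ∈ Ω → ∀ᶠ y in nhds b, (a, y) ∈ Ω := by
    intro a b h
    have hc : ContinuousAt (fun y : ℝ => ((a, y) : ℝ × ℝ)) b :=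
      (continuous_const.prodMk continuous_id).continuousAt
    exact hc.eventually_mem (hΩ.mem_nhds h)
  have hmemt : ∀ᶠ s in nhds t, (s, x) ∈ Ω := by
    have hc : ContinuousAt (fun s : ℝ => ((s, x) : ℝ × ℝ)) t :=
      (continuous_id.prodMk continuous_const).continuousAt
    exact hc.eventually_mem (hΩ.mem_nhds hp)
  -- identification of partial derivatives with Dx iterates
  have e1 : ∀ a b : ℝ, (a, b) ∈ Ω → pxderiv u a b = Dx F (a, b) := fun a b h =>
    px_fderiv (hd0 _ h)
  have e2 : ∀ a b : ℝ, (a, b) ∈ Ω → pxderiv (pxderiv u) a b = Dx (Dx F) (a, b) := by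
    intro a b h
    have h1 : (fun y => pxderiv u a y) =ᶠ[nhds b] fun y => Dx F (a, y) :=
      (hmemx a b h).mono fun y hy => e1 a y hy
    show deriv (fun y => pxderiv u a y) b = _
    rw [h1.deriv_eq]
    exact px_fderiv (hd1 _ h)
  have e3 : ∀ a b : ℝ, (a, b) ∈ Ω →
      pxderiv (pxderiv (pxderiv u)) a b = Dx (Dx (Dx F)) (a, b) := by
    intro a b h
    have h1 : (fun y => pxderiv (pxderiv u) a y) =ᶠ[nhds b] fun y => Dx (Dx F) (a, y) :=
      (hmemx a b h).mono fun y hy => e2 a y hy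
    show deriv (fun y => pxderiv (pxderiv u) a y) b = _
    rw [h1.deriv_eq]
    exact px_fderiv (hd2 _ h)
  -- time derivatives via the PDE and Clairaut
  have ht0 : ∀ q ∈ Ω, Dt F q = F q * Dx F q := by
    intro q hq
    obtain ⟨a, b⟩ := q
    have h1 : Dt F (a, b) = ptderiv u a b := (pt_fderiv (hd0 _ hq)).symm
    rw [h1, heq a b hq, e1 a b hq]
    rfl
  have ht1 : ∀ q ∈ Ω, Dt (Dx F) q = Dx F q * Dx F q + F q * Dx (Dx F) q := by
    intro q hq
    have hev : Dt F =ᶠ[nhds q] fun r => F r * Dx F r :=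
      (hΩ.eventually_mem hq).mono fun r hr => ht0 r hr
    rw [clairaut' ((hC q hq).of_le (by norm_num)), Dx_congr hev,
      Dx_mul (hd0 q hq) (hd1 q hq)]
    ring
  have ht2 : ∀ q ∈ Ω, Dt (Dx (Dx F)) q
      = 3 * (Dx F q * Dx (Dx F) q) + F q * Dx (Dx (Dx F)) q := by
    intro q hq
    have hev : Dt (Dx F) =ᶠ[nhds q] fun r => Dx F r * Dx F r + F r * Dx (Dx F) r :=
      (hΩ.eventually_mem hq).mono fun r hr => ht1 r hr
    rw [clairaut' ((hC1 q hq).of_le (by norm_num)), Dx_congr hev,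
      Dx_add ((hd1 q hq).fun_mul (hd1 q hq)) ((hd0 q hq).fun_mul (hd2 q hq)),
      Dx_mul (hd1 q hq) (hd1 q hq), Dx_mul (hd0 q hq) (hd2 q hq)]
    ring
  have ht3 : Dt (Dx (Dx (Dx F))) (t, x)
      = 3 * (Dx (Dx F) (t, x) * Dx (Dx F) (t, x))
        + 4 * (Dx F (t, x) * Dx (Dx (Dx F)) (t, x))
        + F (t, x) * Dx (Dx (Dx (Dx F))) (t, x) := by
    have hev : Dt (Dx (Dx F)) =ᶠ[nhds (t, x)]
        fun r => 3 * (Dx F r * Dx (Dx F) r) + F r * Dx (Dx (Dx F)) r :=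
      (hΩ.eventually_mem hp).mono fun r hr => ht2 r hr
    rw [clairaut' (hC2 _ hp), Dx_congr hev,
      Dx_add (((hd1 _ hp).fun_mul (hd2 _ hp)).const_mul 3) ((hd0 _ hp).fun_mul (hd3 _ hp)),
      Dx_const_mul 3 ((hd1 _ hp).fun_mul (hd2 _ hp)),
      Dx_mul (hd1 _ hp) (hd2 _ hp), Dx_mul (hd0 _ hp) (hd3 _ hp)]
    ring
  -- the characteristic as a function of Dx iterates
  set H : ℝ × ℝ → ℝ :=
    fun r => Dx F r * Dx (Dx (Dx F)) r - 3 * (Dx (Dx F) r * Dx (Dx F) r) with hHdef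
  have hηΩ : ∀ a b : ℝ, (a, b) ∈ Ω → η a b = H (a, b) := by
    intro a b h
    show pxderiv u a b * pxderiv (pxderiv (pxderiv u)) a b
        - 3 * (pxderiv (pxderiv u) a b) ^ 2 = H (a, b)
    rw [e1 a b h, e2 a b h, e3 a b h, hHdef]
    ring
  have hdH : DifferentiableAt ℝ H (t, x) :=
    ((hd1 _ hp).fun_mul (hd3 _ hp)).sub (((hd2 _ hp).fun_mul (hd2 _ hp)).const_mul 3)
  have hpx : pxderiv η t x = Dx H (t, x) := by
    have h1 : (fun y => η t y) =ᶠ[nhds x] fun y => H (t, y) :=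
      (hmemx t x hp).mono fun y hy => hηΩ t y hy
    show deriv (fun y => η t y) x = _
    rw [h1.deriv_eq]
    exact px_fderiv hdH
  have hpt : ptderiv η t x = Dt H (t, x) := by
    have h1 : (fun s => η s x) =ᶠ[nhds t] fun s => H (s, x) :=
      hmemt.mono fun s hs => hηΩ s x hs
    show deriv (fun s => η s x) t = _
    rw [h1.deriv_eq]
    exact pt_fderiv hdH
  have hDxH : Dx H (t, x)
      = Dx (Dx F) (t, x) * Dx (Dx (Dx F)) (t, x)
        + Dx F (t, x) * Dx (Dx (Dx (Dx F))) (t, x)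
        - 6 * (Dx (Dx F) (t, x) * Dx (Dx (Dx F)) (t, x)) := by
    rw [hHdef,
      Dx_sub ((hd1 _ hp).fun_mul (hd3 _ hp)) (((hd2 _ hp).fun_mul (hd2 _ hp)).const_mul 3),
      Dx_mul (hd1 _ hp) (hd3 _ hp),
      Dx_const_mul 3 ((hd2 _ hp).fun_mul (hd2 _ hp)), Dx_mul (hd2 _ hp) (hd2 _ hp)]
    ring
  have hDtH : Dt H (t, x)
      = Dt (Dx F) (t, x) * Dx (Dx (Dx F)) (t, x)
        + Dx F (t, x) * Dt (Dx (Dx (Dx F))) (t, x)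
        - 3 * (Dx (Dx F) (t, x) * Dt (Dx (Dx F)) (t, x)
            + Dt (Dx (Dx F)) (t, x) * Dx (Dx F) (t, x)) := by
    rw [hHdef,
      Dt_sub ((hd1 _ hp).fun_mul (hd3 _ hp)) (((hd2 _ hp).fun_mul (hd2 _ hp)).const_mul 3),
      Dt_mul (hd1 _ hp) (hd3 _ hp),
      Dt_const_mul 3 ((hd2 _ hp).fun_mul (hd2 _ hp)), Dt_mul (hd2 _ hp) (hd2 _ hp)]
    ring
  have huF : u t x = F (t, x) := rfl
  have key : ptderiv η t x - pxderiv u t x * η t x - u t x * pxderiv η t x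
      = 4 * pxderiv u t x * η t x := by
    rw [hpt, hpx, hDtH, hDxH, hηΩ t x hp, e1 t x hp, huF,
      ht1 _ hp, ht2 _ hp, ht3, hHdef]
    ring
  exact ⟨key, fun h0 => by rw [key, h0, mul_zero]⟩
end

section
/- Define u(t,x) = 2·√(t² + t − x) − 2t − 1 on the open set Ω = {(t,x) ∈ ℝ² : t² + t − x > 0}. Then on Ω: (i) u satisfies the transport equation ∂u/∂t = u·∂u/∂x; (ii) u satisfies the constraint u_x·u_xxx − 3·u_xx² = 0; and (iii) u_x·u_xx = (1/2)(t² + t − x)^{−2} > 0, so the determining expression 2 u_x u_xx of the characteristic η = u_xx is nonzero along this solution (hence η = u_xx is not a classical Lie–Bäcklund symmetry of the transport equation). -/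
private lemma hg_aux (t y : ℝ) : HasDerivAt (fun z : ℝ => t ^ 2 + t - z) (-1) y := by
  simpa using (hasDerivAt_id y).const_sub (t ^ 2 + t)

private lemma sqrt_hd (t y : ℝ) (h : 0 < t ^ 2 + t - y) :
    HasDerivAt (fun z => Real.sqrt (t ^ 2 + t - z))
      (-(2 * Real.sqrt (t ^ 2 + t - y))⁻¹) y := by
  have := (Real.hasDerivAt_sqrt h.ne').comp y (hg_aux t y)
  simpa [div_eq_mul_inv, Function.comp_def] using this

private lemma d1 (t y : ℝ) (h : 0 < t ^ 2 + t - y) :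
    HasDerivAt (fun z => 2 * Real.sqrt (t ^ 2 + t - z) - 2 * t - 1)
      (-(Real.sqrt (t ^ 2 + t - y))⁻¹) y := by
  have hs : (0:ℝ) < Real.sqrt (t ^ 2 + t - y) := Real.sqrt_pos.2 h
  have := (((sqrt_hd t y h).const_mul 2).sub_const (2 * t)).sub_const 1
  refine this.congr_deriv ?_
  field_simp

private lemma d2 (t y : ℝ) (h : 0 < t ^ 2 + t - y) :
    HasDerivAt (fun z => -(Real.sqrt (t ^ 2 + t - z))⁻¹)
      (-(1 / 2 * ((Real.sqrt (t ^ 2 + t - y))⁻¹) ^ 3)) y := by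
  have hs : (0:ℝ) < Real.sqrt (t ^ 2 + t - y) := Real.sqrt_pos.2 h
  have := ((sqrt_hd t y h).inv hs.ne').neg
  have hss : Real.sqrt (t ^ 2 + t - y) ^ 2 = t ^ 2 + t - y := Real.sq_sqrt h.le
  refine this.congr_deriv ?_
  field_simp

private lemma d3 (t y : ℝ) (h : 0 < t ^ 2 + t - y) :
    HasDerivAt (fun z => -(1 / 2 * ((Real.sqrt (t ^ 2 + t - z))⁻¹) ^ 3))
      (-(3 / 4 * ((Real.sqrt (t ^ 2 + t - y))⁻¹) ^ 5)) y := by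
  have hs : (0:ℝ) < Real.sqrt (t ^ 2 + t - y) := Real.sqrt_pos.2 h
  have h1 : HasDerivAt (fun z => (Real.sqrt (t ^ 2 + t - z))⁻¹)
      (-(-(2 * Real.sqrt (t ^ 2 + t - y))⁻¹) / (Real.sqrt (t ^ 2 + t - y)) ^ 2) y :=
    (sqrt_hd t y h).inv hs.ne'
  have h2 := (h1.pow 3).const_mul (1/2 : ℝ)
  have := h2.neg
  have hss : Real.sqrt (t ^ 2 + t - y) ^ 2 = t ^ 2 + t - y := Real.sq_sqrt h.le
  refine this.congr_deriv ?_
  push_cast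
  ring

/-- On `Ω = {t² + t - x > 0}`, the function `u = 2√(t² + t - x) - 2t - 1` solves the
transport equation `u_t = u u_x`, satisfies the constraint `u_x u_xxx - 3 u_xx² = 0`,
and has `u_x u_xx = (1/2)(t² + t - x)⁻² > 0`, so the determining expression `2 u_x u_xx`
of `η = u_xx` is nonzero along this solution (hence `η = u_xx` is not a classical
Lie–Bäcklund symmetry of the transport equation). -/
theorem stmt8 :
    let u : ℝ → ℝ → ℝ := fun t x => 2 * Real.sqrt (t ^ 2 + t - x) - 2 * t - 1
    ∀ t x : ℝ, t ^ 2 + t - x > 0 →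
      ptderiv u t x = u t x * pxderiv u t x ∧
      pxderiv u t x * pxderiv (pxderiv (pxderiv u)) t x
          - 3 * (pxderiv (pxderiv u) t x) ^ 2 = 0 ∧
      pxderiv u t x * pxderiv (pxderiv u) t x = 1 / 2 * (t ^ 2 + t - x) ^ (-2 : ℤ) ∧
      0 < pxderiv u t x * pxderiv (pxderiv u) t x := by
  intro u t x h
  have hs : (0:ℝ) < Real.sqrt (t ^ 2 + t - x) := Real.sqrt_pos.2 h
  set s := Real.sqrt (t ^ 2 + t - x) with hsdef
  -- first x-derivative, valid for all t' y with positivity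
  have hux : ∀ t' y : ℝ, 0 < t' ^ 2 + t' - y →
      pxderiv u t' y = -(Real.sqrt (t' ^ 2 + t' - y))⁻¹ := by
    intro t' y hy
    exact (d1 t' y hy).deriv
  -- open set in y for fixed t
  have hopen : ∀ t' : ℝ, IsOpen {y : ℝ | 0 < t' ^ 2 + t' - y} :=
    fun t' => isOpen_lt continuous_const (by continuity)
  -- second x-derivative
  have huxx : ∀ t' y : ℝ, 0 < t' ^ 2 + t' - y →
      pxderiv (pxderiv u) t' y = -(1 / 2 * ((Real.sqrt (t' ^ 2 + t' - y))⁻¹) ^ 3) := by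
    intro t' y hy
    have hmem : {z : ℝ | 0 < t' ^ 2 + t' - z} ∈ nhds y := (hopen t').mem_nhds hy
    have heq : pxderiv u t' =ᶠ[nhds y] fun z => -(Real.sqrt (t' ^ 2 + t' - z))⁻¹ :=
      Filter.eventually_of_mem hmem (fun z hz => hux t' z hz)
    calc pxderiv (pxderiv u) t' y = deriv (fun z => -(Real.sqrt (t' ^ 2 + t' - z))⁻¹) y :=
          heq.deriv_eq
      _ = _ := (d2 t' y hy).deriv
  -- third x-derivative
  have huxxx : pxderiv (pxderiv (pxderiv u)) t x = -(3 / 4 * (s⁻¹) ^ 5) := by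
    have hmem : {z : ℝ | 0 < t ^ 2 + t - z} ∈ nhds x := (hopen t).mem_nhds h
    have heq : pxderiv (pxderiv u) t =ᶠ[nhds x]
        fun z => -(1 / 2 * ((Real.sqrt (t ^ 2 + t - z))⁻¹) ^ 3) :=
      Filter.eventually_of_mem hmem (fun z hz => huxx t z hz)
    calc pxderiv (pxderiv (pxderiv u)) t x
        = deriv (fun z => -(1 / 2 * ((Real.sqrt (t ^ 2 + t - z))⁻¹) ^ 3)) x := heq.deriv_eq
      _ = _ := (d3 t x h).deriv
  have hux' : pxderiv u t x = -s⁻¹ := hux t x h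
  have huxx' : pxderiv (pxderiv u) t x = -(1 / 2 * (s⁻¹) ^ 3) := huxx t x h
  -- t-derivative
  have hut : ptderiv u t x = (2 * t + 1) * s⁻¹ - 2 := by
    have hinner : HasDerivAt (fun r : ℝ => r ^ 2 + r - x) (2 * t + 1) t := by
      simpa using ((hasDerivAt_pow 2 t).add (hasDerivAt_id t)).sub_const x
    have hsq := (Real.hasDerivAt_sqrt h.ne').comp t hinner
    have : HasDerivAt (fun r => 2 * Real.sqrt (r ^ 2 + r - x) - 2 * r - 1)
        (2 * (1 / (2 * s) * (2 * t + 1)) - 2) t := by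
      have h2 : HasDerivAt (fun r : ℝ => 2 * r) 2 t := by
        simpa using (hasDerivAt_id t).const_mul (2:ℝ)
      exact (((hsq.const_mul 2).sub h2).sub_const 1)
    have := this.deriv
    rw [show ptderiv u t x = deriv (fun r => 2 * Real.sqrt (r ^ 2 + r - x) - 2 * r - 1) t from rfl,
      this]
    field_simp
  have hs2 : s ^ 2 = t ^ 2 + t - x := Real.sq_sqrt h.le
  refine ⟨?_, ?_, ?_, ?_⟩
  · rw [hut, hux']
    show (2 * t + 1) * s⁻¹ - 2 = (2 * s - 2 * t - 1) * -s⁻¹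
    field_simp
    ring
  · rw [hux', huxx', huxxx]
    ring
  · rw [hux', huxx']
    have h4 : (t ^ 2 + t - x) ^ (-2 : ℤ) = (s⁻¹) ^ 4 := by
      rw [← hs2, zpow_neg, zpow_two, inv_pow]
      congr 1
      ring
    rw [h4]
    ring
  · rw [hux', huxx']
    have : -s⁻¹ * -(1 / 2 * (s⁻¹) ^ 3) = 1 / 2 * (s⁻¹) ^ 4 := by ring
    rw [this]
    positivity
end

section
/- Let u : Ω → ℝ be a C² solution of the transport equation ∂u/∂t = u·∂u/∂x on an open set Ω ⊆ ℝ² with ∂u/∂x ≠ 0 on Ω. Then the function J(t,x) = (t·u_x(t,x) + 1)/u_x(t,x) = t + 1/u_x(t,x) satisfies ∂J/∂t = u·∂J/∂x on Ω. -/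
/-- Along any C² solution of the transport equation `u_t = u u_x` with `u_x ≠ 0`,
the differential function `J = (t u_x + 1)/u_x` is an invariant: `∂J/∂t = u ∂J/∂x`. -/
theorem stmt9 (u : ℝ → ℝ → ℝ) (Ω : Set (ℝ × ℝ)) (hΩ : IsOpen Ω)
    (hu : ContDiffOn ℝ 2 (Function.uncurry u) Ω)
    (hux : ∀ t x : ℝ, (t, x) ∈ Ω → pxderiv u t x ≠ 0)
    (heq : ∀ t x : ℝ, (t, x) ∈ Ω → ptderiv u t x = u t x * pxderiv u t x) :
    let J : ℝ → ℝ → ℝ := fun t x => (t * pxderiv u t x + 1) / pxderiv u t x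
    ∀ t x : ℝ, (t, x) ∈ Ω → ptderiv J t x = u t x * pxderiv J t x := by
  intro J t x hp
  set F := Function.uncurry u with hFdef
  have hΩn : Ω ∈ nhds (t, x) := hΩ.mem_nhds hp
  have hΩev : ∀ᶠ q : ℝ × ℝ in nhds (t, x), q ∈ Ω := hΩn
  have hF : ContDiffAt ℝ 2 F (t, x) := hu.contDiffAt hΩn
  have hev : ∀ᶠ q : ℝ × ℝ in nhds (t, x), DifferentiableAt ℝ F q :=
    (hF.eventually (by norm_num)).mono fun q hq => hq.differentiableAt (by norm_num)
  set φ := fderiv ℝ F with hφdef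
  have hφd : DifferentiableAt ℝ φ (t, x) :=
    (hF.fderiv_right (m := 1) (by norm_num)).differentiableAt (by norm_num)
  set f' := fderiv ℝ φ (t, x) with hf'def
  have hsymm : ∀ v w : ℝ × ℝ, f' v w = f' w v := fun v w =>
    (hF.isSymmSndFDerivAt (by norm_num)) v w
  -- partial derivatives along lines
  have hx_line : ∀ q : ℝ × ℝ, DifferentiableAt ℝ F q →
      HasDerivAt (fun y => u q.1 y) (φ q (0, 1)) q.2 := by
    intro q hq
    have h1 : HasDerivAt (fun y => ((q.1 : ℝ), y)) ((0 : ℝ), (1 : ℝ)) q.2 :=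
      (hasDerivAt_const q.2 q.1).prodMk (hasDerivAt_id q.2)
    have h2 := hq.hasFDerivAt.comp_hasDerivAt q.2 h1
    exact h2
  have ht_line : ∀ q : ℝ × ℝ, DifferentiableAt ℝ F q →
      HasDerivAt (fun s => u s q.2) (φ q (1, 0)) q.1 := by
    intro q hq
    have h1 : HasDerivAt (fun s => ((s : ℝ), q.2)) ((1 : ℝ), (0 : ℝ)) q.1 :=
      (hasDerivAt_id q.1).prodMk (hasDerivAt_const q.1 q.2)
    have h2 := hq.hasFDerivAt.comp_hasDerivAt q.1 h1
    exact h2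
  have hpx : ∀ᶠ q : ℝ × ℝ in nhds (t, x), pxderiv u q.1 q.2 = φ q (0, 1) :=
    hev.mono fun q hq => (hx_line q hq).deriv
  have hpt : ∀ᶠ q : ℝ × ℝ in nhds (t, x), ptderiv u q.1 q.2 = φ q (1, 0) :=
    hev.mono fun q hq => (ht_line q hq).deriv
  -- the value c = u_x(t,x)
  set c := φ (t, x) (0, 1) with hcdef
  have hcval : pxderiv u t x = c := (hx_line (t, x) (hF.differentiableAt (by norm_num))).deriv
  have hc : c ≠ 0 := hcval ▸ hux t x hp
  -- tendsto of line embeddings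
  have htt : Filter.Tendsto (fun s => ((s : ℝ), x)) (nhds t) (nhds (t, x)) :=
    (continuous_id.prodMk continuous_const).tendsto t
  have htx : Filter.Tendsto (fun y => ((t : ℝ), y)) (nhds x) (nhds (t, x)) :=
    (continuous_const.prodMk continuous_id).tendsto x
  -- second partials along lines
  set A := f' (1, 0) (0, 1) with hAdef
  set B := f' (0, 1) (0, 1) with hBdef
  have hAx : HasDerivAt (fun s => φ (s, x) (0, 1)) A t := by
    have h1 : HasDerivAt (fun s => ((s : ℝ), x)) ((1 : ℝ), (0 : ℝ)) t :=
      (hasDerivAt_id t).prodMk (hasDerivAt_const t x)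
    have h2 := hφd.hasFDerivAt.comp_hasDerivAt t h1
    have h3 := (ContinuousLinearMap.apply ℝ ℝ ((0 : ℝ), (1 : ℝ))).hasFDerivAt.comp_hasDerivAt t h2
    exact h3
  have hBx : HasDerivAt (fun y => φ (t, y) (0, 1)) B x := by
    have h1 : HasDerivAt (fun y => ((t : ℝ), y)) ((0 : ℝ), (1 : ℝ)) x :=
      (hasDerivAt_const x t).prodMk (hasDerivAt_id x)
    have h2 := hφd.hasFDerivAt.comp_hasDerivAt x h1
    have h3 := (ContinuousLinearMap.apply ℝ ℝ ((0 : ℝ), (1 : ℝ))).hasFDerivAt.comp_hasDerivAt x h2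
    exact h3
  have hAy : HasDerivAt (fun y => φ (t, y) (1, 0)) (f' (0, 1) (1, 0)) x := by
    have h1 : HasDerivAt (fun y => ((t : ℝ), y)) ((0 : ℝ), (1 : ℝ)) x :=
      (hasDerivAt_const x t).prodMk (hasDerivAt_id x)
    have h2 := hφd.hasFDerivAt.comp_hasDerivAt x h1
    have h3 := (ContinuousLinearMap.apply ℝ ℝ ((1 : ℝ), (0 : ℝ))).hasFDerivAt.comp_hasDerivAt x h2
    exact h3
  -- key PDE consequence: A = c^2 + u t x * B
  have hu_x : HasDerivAt (fun y => u t y) c x := hx_line (t, x) (hF.differentiableAt (by norm_num))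
  have hevdiff : ∀ᶠ y in nhds x, DifferentiableAt ℝ F (t, y) := htx.eventually hev
  have hevx : (fun y => φ (t, y) (1, 0)) =ᶠ[nhds x] fun y => u t y * φ (t, y) (0, 1) := by
    filter_upwards [htx.eventually hpx, htx.eventually hpt, htx.eventually hΩev] with y h1 h2 h3
    rw [← h1, ← h2]
    exact heq t y h3
  have hprod : HasDerivAt (fun y => u t y * φ (t, y) (0, 1)) (c * c + u t x * B) x := by
    have := hu_x.mul hBx
    exact this
  have hkey : A = c * c + u t x * B := by
    have h1 : deriv (fun y => φ (t, y) (1, 0)) x = deriv (fun y => u t y * φ (t, y) (0, 1)) x :=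
      hevx.deriv_eq
    rw [hAdef, hsymm (1, 0) (0, 1), ← hAy.deriv, h1, hprod.deriv]
  -- compute ptderiv J
  have hJt : (fun s => J s x) =ᶠ[nhds t] fun s => s + (φ (s, x) (0, 1))⁻¹ := by
    filter_upwards [htt.eventually hpx, htt.eventually hΩev] with s h1 h2
    have hne : pxderiv u s x ≠ 0 := hux s x h2
    simp only [J]
    rw [add_div, mul_div_assoc, div_self hne, mul_one, one_div, h1]
  have hJtd : ptderiv J t x = 1 + -A / c ^ 2 := by
    have hd : HasDerivAt (fun s => s + (φ (s, x) (0, 1))⁻¹) (1 + -A / c ^ 2) t :=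
      (hasDerivAt_id t).add (hAx.inv hc)
    show deriv (fun s => J s x) t = 1 + -A / c ^ 2
    rw [hJt.deriv_eq, hd.deriv]
  -- compute pxderiv J
  have hJx : (fun y => J t y) =ᶠ[nhds x] fun y => t + (φ (t, y) (0, 1))⁻¹ := by
    filter_upwards [htx.eventually hpx, htx.eventually hΩev] with y h1 h2
    have hne : pxderiv u t y ≠ 0 := hux t y h2
    simp only [J]
    rw [add_div, mul_div_assoc, div_self hne, mul_one, one_div, h1]
  have hJxd : pxderiv J t x = -B / c ^ 2 := by
    have hd : HasDerivAt (fun y => (t : ℝ) + (φ (t, y) (0, 1))⁻¹) (0 + -B / c ^ 2) x :=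
      (hasDerivAt_const x t).add (hBx.inv hc)
    show deriv (fun y => J t y) x = -B / c ^ 2
    rw [hJx.deriv_eq, hd.deriv, zero_add]
  rw [hJtd, hJxd, hkey]
  field_simp
  ring
end

section
/- Let u : Ω → ℝ be a C³ solution of the transport equation ∂u/∂t = u·∂u/∂x on an open set Ω ⊆ ℝ² with ∂u/∂x ≠ 0 on Ω. Then the function J(t,x) = −u_xx(t,x)/u_x(t,x)³ satisfies ∂J/∂t = u·∂J/∂x on Ω. -/
open Function Filter Topology ContinuousLinearMap

section Helpers

variable {F : Type*} [NormedAddCommGroup F] [NormedSpace ℝ F]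

/-- Slice a Fréchet derivative in the `t` direction. -/
lemma sliceT {g : ℝ × ℝ → F} {L : ℝ × ℝ →L[ℝ] F} {t x : ℝ}
    (h : HasFDerivAt g L (t, x)) :
    HasDerivAt (fun s => g (s, x)) (L (1, 0)) t := by
  have h1 : HasFDerivAt (fun s : ℝ => (s, x))
      ((ContinuousLinearMap.id ℝ ℝ).prod 0) t :=
    HasFDerivAt.prodMk (hasFDerivAt_id t) (hasFDerivAt_const x t)
  have := (h.comp t h1).hasDerivAt
  simpa [Function.comp_def] using this

/-- Slice a Fréchet derivative in the `x` direction. -/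
lemma sliceX {g : ℝ × ℝ → F} {L : ℝ × ℝ →L[ℝ] F} {t x : ℝ}
    (h : HasFDerivAt g L (t, x)) :
    HasDerivAt (fun y => g (t, y)) (L (0, 1)) x := by
  have h1 : HasFDerivAt (fun y : ℝ => (t, y))
      ((0 : ℝ →L[ℝ] ℝ).prod (ContinuousLinearMap.id ℝ ℝ)) x :=
    HasFDerivAt.prodMk (hasFDerivAt_const t x) (hasFDerivAt_id x)
  have := (h.comp x h1).hasDerivAt
  simpa [Function.comp_def] using this

/-- Differentiate a continuous-linear-map-valued function applied to a fixed vector. -/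
lemma fdApply {Φ : ℝ × ℝ → ((ℝ × ℝ) →L[ℝ] F)} {Φ' : (ℝ × ℝ) →L[ℝ] ((ℝ × ℝ) →L[ℝ] F)}
    {q : ℝ × ℝ} (h : HasFDerivAt Φ Φ' q) (a : ℝ × ℝ) :
    HasFDerivAt (fun r => Φ r a) ((ContinuousLinearMap.apply ℝ F a).comp Φ') q :=
  (ContinuousLinearMap.apply ℝ F a).hasFDerivAt.comp q h

lemma evmemT {Ω : Set (ℝ × ℝ)} (hΩ : IsOpen Ω) {a b : ℝ} (h : (a, b) ∈ Ω) :
    ∀ᶠ s in 𝓝 a, (s, b) ∈ Ω := by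
  have hc : ContinuousAt (fun s : ℝ => (s, b)) a := by fun_prop
  exact hc (hΩ.mem_nhds h)

lemma evmemX {Ω : Set (ℝ × ℝ)} (hΩ : IsOpen Ω) {a b : ℝ} (h : (a, b) ∈ Ω) :
    ∀ᶠ y in 𝓝 b, (a, y) ∈ Ω := by
  have hc : ContinuousAt (fun y : ℝ => (a, y)) b := by fun_prop
  exact hc (hΩ.mem_nhds h)

end Helpers

/-- Along any C³ solution of the transport equation `u_t = u u_x` with `u_x ≠ 0`,
the differential function `J = -u_xx/u_x³` is an invariant: `∂J/∂t = u ∂J/∂x`. -/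
theorem stmt10 (u : ℝ → ℝ → ℝ) (Ω : Set (ℝ × ℝ)) (hΩ : IsOpen Ω)
    (hu : ContDiffOn ℝ 3 (Function.uncurry u) Ω)
    (hux : ∀ t x : ℝ, (t, x) ∈ Ω → pxderiv u t x ≠ 0)
    (heq : ∀ t x : ℝ, (t, x) ∈ Ω → ptderiv u t x = u t x * pxderiv u t x) :
    let J : ℝ → ℝ → ℝ := fun t x => -(pxderiv (pxderiv u) t x) / (pxderiv u t x) ^ 3
    ∀ t x : ℝ, (t, x) ∈ Ω → ptderiv J t x = u t x * pxderiv J t x := by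
  intro J t x hq
  set G := Function.uncurry u with hGdef
  set F1 := fderiv ℝ G with hF1def
  set F2 := fderiv ℝ F1 with hF2def
  set F3 := fderiv ℝ F2 with hF3def
  -- differentiability of G, F1, F2 at points of Ω
  have hGd : ∀ q ∈ Ω, HasFDerivAt G (F1 q) q := fun q hqΩ =>
    ((hu.contDiffAt (hΩ.mem_nhds hqΩ)).differentiableAt (by norm_num)).hasFDerivAt
  have hF1c : ∀ q ∈ Ω, ContDiffAt ℝ 2 F1 q := fun q hqΩ =>
    (hu.contDiffAt (hΩ.mem_nhds hqΩ)).fderiv_right (m := 2) (by norm_num)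
  have hF1d : ∀ q ∈ Ω, HasFDerivAt F1 (F2 q) q := fun q hqΩ =>
    ((hF1c q hqΩ).differentiableAt (by norm_num)).hasFDerivAt
  have hF2d : ∀ q ∈ Ω, HasFDerivAt F2 (F3 q) q := fun q hqΩ =>
    (((hF1c q hqΩ).fderiv_right (m := 1) (by norm_num)).differentiableAt (by norm_num)).hasFDerivAt
  -- first partial derivatives in terms of F1
  have hpx1 : ∀ q ∈ Ω, pxderiv u q.1 q.2 = F1 q (0, 1) := by
    rintro ⟨a, b⟩ hqΩ
    exact (sliceX (hGd _ hqΩ)).deriv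
  have hpt1 : ∀ q ∈ Ω, ptderiv u q.1 q.2 = F1 q (1, 0) := by
    rintro ⟨a, b⟩ hqΩ
    exact (sliceT (hGd _ hqΩ)).deriv
  -- the PDE in terms of F1
  have hpde : ∀ q ∈ Ω, F1 q (1, 0) = G q * F1 q (0, 1) := by
    rintro ⟨a, b⟩ hqΩ
    rw [← hpx1 _ hqΩ, ← hpt1 _ hqΩ]
    exact heq a b hqΩ
  -- second x-partial in terms of F2
  have hpx2 : ∀ q ∈ Ω, pxderiv (pxderiv u) q.1 q.2 = F2 q (0, 1) (0, 1) := by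
    rintro ⟨a, b⟩ hqΩ
    have hv : HasDerivAt (fun y => F1 (a, y) (0, 1)) (F2 (a, b) (0, 1) (0, 1)) b := by
      simpa using sliceX (fdApply (hF1d _ hqΩ) (0, 1))
    have hev : (fun y => pxderiv u a y) =ᶠ[𝓝 b] (fun y => F1 (a, y) (0, 1)) := by
      filter_upwards [evmemX hΩ hqΩ] with y hy using hpx1 (a, y) hy
    exact (hv.congr_of_eventuallyEq hev).deriv
  -- Clairaut for G : F2 symmetric at points of Ω
  have hsym2 : ∀ q ∈ Ω, F2 q (1, 0) (0, 1) = F2 q (0, 1) (1, 0) := by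
    intro q hqΩ
    have hev : ∀ᶠ r in 𝓝 q, HasFDerivAt G (F1 r) r := by
      filter_upwards [hΩ.mem_nhds hqΩ] with r hr using hGd r hr
    exact second_derivative_symmetric_of_eventually hev (hF1d q hqΩ) (1, 0) (0, 1)
  -- differentiated PDE : u_tx = u_x² + u u_xx on Ω
  have hA : ∀ q ∈ Ω, F2 q (1, 0) (0, 1)
      = (F1 q (0, 1)) ^ 2 + G q * F2 q (0, 1) (0, 1) := by
    rintro ⟨a, b⟩ hqΩ
    rw [hsym2 _ hqΩ]
    have h1 : HasDerivAt (fun y => F1 (a, y) (1, 0)) (F2 (a, b) (0, 1) (1, 0)) b := by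
      simpa using sliceX (fdApply (hF1d _ hqΩ) (1, 0))
    have hg : HasDerivAt (fun y => G (a, y)) (F1 (a, b) (0, 1)) b := sliceX (hGd _ hqΩ)
    have hv : HasDerivAt (fun y => F1 (a, y) (0, 1)) (F2 (a, b) (0, 1) (0, 1)) b := by
      simpa using sliceX (fdApply (hF1d _ hqΩ) (0, 1))
    have h2 := hg.mul hv
    have hev : (fun y => F1 (a, y) (1, 0)) =ᶠ[𝓝 b]
        (fun y => G (a, y) * F1 (a, y) (0, 1)) := by
      filter_upwards [evmemX hΩ hqΩ] with y hy using hpde (a, y) hy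
    have h3 := h2.congr_of_eventuallyEq hev
    have h4 := h1.unique h3
    rw [h4]; ring
  -- Clairaut for F1 : F3 symmetric at (t, x)
  have hsym3 : F3 (t, x) (1, 0) (0, 1) = F3 (t, x) (0, 1) (1, 0) := by
    have hev : ∀ᶠ r in 𝓝 (t, x), HasFDerivAt F1 (F2 r) r := by
      filter_upwards [hΩ.mem_nhds hq] with r hr using hF1d r hr
    exact second_derivative_symmetric_of_eventually hev (hF2d _ hq) (1, 0) (0, 1)
  -- abbreviations for values at (t, x)
  set V := F1 (t, x) (0, 1) with hVdef
  set W := F2 (t, x) (0, 1) (0, 1) with hWdef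
  set A := F2 (t, x) (1, 0) (0, 1) with hAdef
  set B := F3 (t, x) (1, 0) (0, 1) (0, 1) with hBdef
  set C := F3 (t, x) (0, 1) (0, 1) (0, 1) with hCdef
  have hU : G (t, x) = u t x := rfl
  have hV0 : V ≠ 0 := by rw [hVdef, ← hpx1 (t, x) hq]; exact hux t x hq
  -- u_txx = 3 u_x u_xx + u u_xxx at (t, x)
  have hB3 : B = 2 * V * W + (V * W + u t x * C) := by
    have hBs : B = F3 (t, x) (0, 1) (1, 0) (0, 1) := by rw [hBdef, hsym3]
    have h1 : HasDerivAt (fun y => F2 (t, y) (1, 0) (0, 1))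
        (F3 (t, x) (0, 1) (1, 0) (0, 1)) x := by
      simpa using sliceX (fdApply (fdApply (hF2d _ hq) (1, 0)) (0, 1))
    have hg : HasDerivAt (fun y => G (t, y)) V x := sliceX (hGd _ hq)
    have hv : HasDerivAt (fun y => F1 (t, y) (0, 1)) W x := by
      simpa using sliceX (fdApply (hF1d _ hq) (0, 1))
    have hw : HasDerivAt (fun y => F2 (t, y) (0, 1) (0, 1)) C x := by
      simpa using sliceX (fdApply (fdApply (hF2d _ hq) (0, 1)) (0, 1))
    have h2 := (hv.pow 2).add (hg.mul hw)
    have hev : (fun y => F2 (t, y) (1, 0) (0, 1)) =ᶠ[𝓝 x]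
        (fun y => (F1 (t, y) (0, 1)) ^ 2 + G (t, y) * F2 (t, y) (0, 1) (0, 1)) := by
      filter_upwards [evmemX hΩ hq] with y hy using hA (t, y) hy
    have h3 := h2.congr_of_eventuallyEq hev
    have h4 := h1.unique h3
    rw [hBs, h4, hU]; ring
  have hA2 : A = V ^ 2 + u t x * W := by rw [hAdef, hA (t, x) hq, hU]
  -- derivatives of the slices of pxderiv u and pxderiv (pxderiv u)
  have hvt : HasDerivAt (fun s => pxderiv u s x) A t := by
    have h1 : HasDerivAt (fun s => F1 (s, x) (0, 1)) A t := by
      simpa using sliceT (fdApply (hF1d _ hq) (0, 1))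
    refine h1.congr_of_eventuallyEq ?_
    filter_upwards [evmemT hΩ hq] with s hs using hpx1 (s, x) hs
  have hwt : HasDerivAt (fun s => pxderiv (pxderiv u) s x) B t := by
    have h1 : HasDerivAt (fun s => F2 (s, x) (0, 1) (0, 1)) B t := by
      simpa using sliceT (fdApply (fdApply (hF2d _ hq) (0, 1)) (0, 1))
    refine h1.congr_of_eventuallyEq ?_
    filter_upwards [evmemT hΩ hq] with s hs using hpx2 (s, x) hs
  have hvx : HasDerivAt (fun y => pxderiv u t y) W x := by
    have h1 : HasDerivAt (fun y => F1 (t, y) (0, 1)) W x := by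
      simpa using sliceX (fdApply (hF1d _ hq) (0, 1))
    refine h1.congr_of_eventuallyEq ?_
    filter_upwards [evmemX hΩ hq] with y hy using hpx1 (t, y) hy
  have hwx : HasDerivAt (fun y => pxderiv (pxderiv u) t y) C x := by
    have h1 : HasDerivAt (fun y => F2 (t, y) (0, 1) (0, 1)) C x := by
      simpa using sliceX (fdApply (fdApply (hF2d _ hq) (0, 1)) (0, 1))
    refine h1.congr_of_eventuallyEq ?_
    filter_upwards [evmemX hΩ hq] with y hy using hpx2 (t, y) hy
  -- compute the two sides
  have hJt : ptderiv J t x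
      = ((-B) * (pxderiv u t x) ^ 3 - (-(pxderiv (pxderiv u) t x)) * ((3 : ℝ) * (pxderiv u t x) ^ 2 * A))
        / ((pxderiv u t x) ^ 3) ^ 2 := by
    have hpw : (fun s => pxderiv u s x) t ≠ 0 := hux t x hq
    have hne : ((fun s => pxderiv u s x) t) ^ 3 ≠ 0 := pow_ne_zero _ hpw
    have h := (hwt.neg).div (hvt.pow 3) hne
    exact h.deriv
  have hJx : pxderiv J t x
      = ((-C) * (pxderiv u t x) ^ 3 - (-(pxderiv (pxderiv u) t x)) * ((3 : ℝ) * (pxderiv u t x) ^ 2 * W))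
        / ((pxderiv u t x) ^ 3) ^ 2 := by
    have hpw : (fun y => pxderiv u t y) x ≠ 0 := hux t x hq
    have hne : ((fun y => pxderiv u t y) x) ^ 3 ≠ 0 := pow_ne_zero _ hpw
    have h := (hwx.neg).div (hvx.pow 3) hne
    exact h.deriv
  rw [hJt, hJx, hpx1 (t, x) hq, hpx2 (t, x) hq, ← hVdef, ← hWdef, hA2, hB3]
  field_simp
  ring
end

section
/- Let u : Ω → ℝ be a C¹ solution of the transport equation ∂u/∂t = u·∂u/∂x on an open set Ω ⊆ ℝ², and let η, f : Ω → ℝ be C¹ functions such that the classical determining identity ∂η/∂t − u_x·η − u·∂η/∂x = 0 holds on Ω. Then the product η* = f·η satisfies ∂η*/∂t − u_x·η* − u·∂η*/∂x = η·(∂f/∂t − u·∂f/∂x) on Ω; in particular, this expression vanishes at every point of Ω where η = 0. Hence f·η satisfies the nonclassical determining condition for the transport equation. -/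
lemma diffT (g : ℝ → ℝ → ℝ) (Ω : Set (ℝ × ℝ)) (hΩ : IsOpen Ω)
    (hg : ContDiffOn ℝ 1 (Function.uncurry g) Ω) {t x : ℝ} (h : (t, x) ∈ Ω) :
    DifferentiableAt ℝ (fun s => g s x) t := by
  have hd : DifferentiableAt ℝ (Function.uncurry g) (t, x) :=
    (hg.differentiableOn one_ne_zero (t, x) h).differentiableAt (hΩ.mem_nhds h)
  exact hd.comp t (((differentiableAt_fun_id : DifferentiableAt ℝ (fun s : ℝ => s) t).prodMk (differentiableAt_const x)))

lemma diffX (g : ℝ → ℝ → ℝ) (Ω : Set (ℝ × ℝ)) (hΩ : IsOpen Ω)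
    (hg : ContDiffOn ℝ 1 (Function.uncurry g) Ω) {t x : ℝ} (h : (t, x) ∈ Ω) :
    DifferentiableAt ℝ (fun y => g t y) x := by
  have hd : DifferentiableAt ℝ (Function.uncurry g) (t, x) :=
    (hg.differentiableOn one_ne_zero (t, x) h).differentiableAt (hΩ.mem_nhds h)
  exact hd.comp x (((differentiableAt_const t).prodMk differentiableAt_fun_id))

/-- If `u` is a C¹ solution of the transport equation `u_t = u u_x` on an open `Ω` and
`η, f` are C¹ functions with `∂η/∂t - u_x η - u ∂η/∂x = 0` on `Ω` (classical determining
identity along `u`), then `η* = f·η` satisfies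
`∂η*/∂t - u_x η* - u ∂η*/∂x = η (∂f/∂t - u ∂f/∂x)` on `Ω`; in particular this vanishes
wherever `η = 0`, so `f·η` satisfies the nonclassical determining condition. -/
theorem stmt14 (u η f : ℝ → ℝ → ℝ) (Ω : Set (ℝ × ℝ)) (hΩ : IsOpen Ω)
    (hu : ContDiffOn ℝ 1 (Function.uncurry u) Ω)
    (hη : ContDiffOn ℝ 1 (Function.uncurry η) Ω)
    (hf : ContDiffOn ℝ 1 (Function.uncurry f) Ω)
    (heq : ∀ t x : ℝ, (t, x) ∈ Ω → ptderiv u t x = u t x * pxderiv u t x)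
    (hdet : ∀ t x : ℝ, (t, x) ∈ Ω →
      ptderiv η t x - pxderiv u t x * η t x - u t x * pxderiv η t x = 0) :
    let ηstar : ℝ → ℝ → ℝ := fun t x => f t x * η t x
    ∀ t x : ℝ, (t, x) ∈ Ω →
      (ptderiv ηstar t x - pxderiv u t x * ηstar t x - u t x * pxderiv ηstar t x
          = η t x * (ptderiv f t x - u t x * pxderiv f t x)) ∧
      (η t x = 0 →
        ptderiv ηstar t x - pxderiv u t x * ηstar t x - u t x * pxderiv ηstar t x = 0) := by
  intro ηstar t x h
  have hft := diffT f Ω hΩ hf h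
  have hfx := diffX f Ω hΩ hf h
  have hηt := diffT η Ω hΩ hη h
  have hηx := diffX η Ω hΩ hη h
  have ht : ptderiv ηstar t x = ptderiv f t x * η t x + f t x * ptderiv η t x := by
    simpa [ptderiv, ηstar] using deriv_fun_mul hft hηt
  have hx : pxderiv ηstar t x = pxderiv f t x * η t x + f t x * pxderiv η t x := by
    simpa [pxderiv, ηstar] using deriv_fun_mul hfx hηx
  have hd := hdet t x h
  constructor
  · rw [ht, hx]; show _ - _ * (f t x * η t x) - _ = _; linear_combination f t x * hd
  · intro h0
    rw [ht, hx]; show _ - _ * (f t x * η t x) - _ = _; linear_combination f t x * hd + (ptderiv f t x - u t x * pxderiv f t x) * h0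
end

section
/- Fix t ∈ ℝ and real constants c, F₁, F₂, F₃, and let s(x) = t² + t − x. On the set {x : s(x) > 0}, the function v(x) = (2c/15)·s(x)^{−2} + F₁ + F₂·s(x)^{−1/2} + F₃·s(x)^{1/2} satisfies the third-order linear ordinary differential equation −v‴(x)·s(x)^{−1/2} − (3/4)·v′(x)·s(x)^{−5/2} + 3·v″(x)·s(x)^{−3/2} + c·s(x)^{−11/2} = 0. -/
private lemma rderiv (t p : ℝ) {x : ℝ} (hx : 0 < t ^ 2 + t - x) :
    HasDerivAt (fun y => (t ^ 2 + t - y) ^ p) (-(p * (t ^ 2 + t - x) ^ (p - 1))) x := by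
  have h1 : HasDerivAt (fun y : ℝ => t ^ 2 + t - y) (-1) x := by
    exact (hasDerivAt_id' x).const_sub (t ^ 2 + t)
  have h2 := (Real.hasDerivAt_rpow_const (x := t ^ 2 + t - x) (p := p)
    (Or.inl hx.ne')).comp x h1
  refine h2.congr_deriv ?_
  ring

/-- For fixed `t` and `s(x) = t² + t - x`, the function
`v = (2c/15) s⁻² + F₁ + F₂ s^{-1/2} + F₃ s^{1/2}` satisfies the third-order ODE
`-v''' s^{-1/2} - (3/4) v' s^{-5/2} + 3 v'' s^{-3/2} + c s^{-11/2} = 0` on `{s > 0}`. -/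
theorem stmt15 (t c F₁ F₂ F₃ : ℝ) :
    let s : ℝ → ℝ := fun x => t ^ 2 + t - x
    let v : ℝ → ℝ := fun x =>
      2 * c / 15 * s x ^ (-2 : ℝ) + F₁ + F₂ * s x ^ (-(1 / 2) : ℝ)
        + F₃ * s x ^ ((1 / 2) : ℝ)
    ∀ x : ℝ, s x > 0 →
      -(deriv (deriv (deriv v)) x) * s x ^ (-(1 / 2) : ℝ)
          - 3 / 4 * deriv v x * s x ^ (-(5 / 2) : ℝ)
          + 3 * deriv (deriv v) x * s x ^ (-(3 / 2) : ℝ)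
          + c * s x ^ (-(11 / 2) : ℝ) = 0 := by
  intro s v x hx
  have hsx : (0 : ℝ) < t ^ 2 + t - x := hx
  set U : Set ℝ := {y | 0 < t ^ 2 + t - y} with hU
  have hUopen : IsOpen U := isOpen_lt continuous_const (by continuity)
  have hxU : x ∈ U := hsx
  set v1 : ℝ → ℝ := fun y => 4 * c / 15 * (t ^ 2 + t - y) ^ (-3 : ℝ)
      + F₂ / 2 * (t ^ 2 + t - y) ^ (-(3 / 2) : ℝ)
      - F₃ / 2 * (t ^ 2 + t - y) ^ (-(1 / 2) : ℝ) with hv1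
  set v2 : ℝ → ℝ := fun y => 12 * c / 15 * (t ^ 2 + t - y) ^ (-4 : ℝ)
      + 3 * F₂ / 4 * (t ^ 2 + t - y) ^ (-(5 / 2) : ℝ)
      - F₃ / 4 * (t ^ 2 + t - y) ^ (-(3 / 2) : ℝ) with hv2
  set v3 : ℝ → ℝ := fun y => 48 * c / 15 * (t ^ 2 + t - y) ^ (-5 : ℝ)
      + 15 * F₂ / 8 * (t ^ 2 + t - y) ^ (-(7 / 2) : ℝ)
      - 3 * F₃ / 8 * (t ^ 2 + t - y) ^ (-(5 / 2) : ℝ) with hv3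
  have hdv : ∀ y ∈ U, HasDerivAt v (v1 y) y := by
    intro y hy
    have hy' : (0 : ℝ) < t ^ 2 + t - y := hy
    have h1 := ((rderiv t (-2) hy').const_mul (2 * c / 15)).add (hasDerivAt_const y F₁)
    have h2 := (rderiv t (-(1 / 2)) hy').const_mul F₂
    have h3 := (rderiv t (1 / 2) hy').const_mul F₃
    have h := (h1.add h2).add h3
    refine h.congr_deriv ?_
    symm
    simp only [hv1]
    norm_num
    ring
  have hdv1 : ∀ y ∈ U, HasDerivAt v1 (v2 y) y := by
    intro y hy
    have hy' : (0 : ℝ) < t ^ 2 + t - y := hy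
    have h1 := (rderiv t (-3) hy').const_mul (4 * c / 15)
    have h2 := (rderiv t (-(3 / 2)) hy').const_mul (F₂ / 2)
    have h3 := (rderiv t (-(1 / 2)) hy').const_mul (F₃ / 2)
    have h := (h1.add h2).sub h3
    refine h.congr_deriv ?_
    symm
    simp only [hv2]
    norm_num
    ring
  have hdv2 : ∀ y ∈ U, HasDerivAt v2 (v3 y) y := by
    intro y hy
    have hy' : (0 : ℝ) < t ^ 2 + t - y := hy
    have h1 := (rderiv t (-4) hy').const_mul (12 * c / 15)
    have h2 := (rderiv t (-(5 / 2)) hy').const_mul (3 * F₂ / 4)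
    have h3 := (rderiv t (-(3 / 2)) hy').const_mul (F₃ / 4)
    have h := (h1.add h2).sub h3
    refine h.congr_deriv ?_
    symm
    simp only [hv3]
    norm_num
    ring
  have e1 : ∀ y ∈ U, deriv v y = v1 y := fun y hy => (hdv y hy).deriv
  have e2 : ∀ y ∈ U, deriv (deriv v) y = v2 y := by
    intro y hy
    have : deriv v =ᶠ[nhds y] v1 := Filter.eventuallyEq_of_mem (hUopen.mem_nhds hy) e1
    rw [this.deriv_eq]
    exact (hdv1 y hy).deriv
  have e3 : deriv (deriv (deriv v)) x = v3 x := by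
    have : deriv (deriv v) =ᶠ[nhds x] v2 := Filter.eventuallyEq_of_mem (hUopen.mem_nhds hxU) e2
    rw [this.deriv_eq]
    exact (hdv2 x hxU).deriv
  rw [e1 x hxU, e2 x hxU, e3]
  have hsxeq : s x = t ^ 2 + t - x := rfl
  rw [hsxeq, hv1, hv2, hv3]
  have hmul : ∀ a b : ℝ, (t ^ 2 + t - x) ^ a * (t ^ 2 + t - x) ^ b
      = (t ^ 2 + t - x) ^ (a + b) := fun a b => (Real.rpow_add hsx a b).symm
  simp only [sub_mul, add_mul, neg_mul, mul_assoc, hmul]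
  norm_num
  ring
end

section
/- Let A, B, C be real constants. Define, on the open set Ω = {(t,x) ∈ ℝ² : s > 0} where s = t² + t − x, the functions u₀(t,x) = 2√s − 2t − 1 and u₁(t,x) = (1/4)·s^{−2} + (−2At + B) + (At² − Bt + C)·s^{−1/2} + A·s^{1/2}. Then ∂u₀/∂t = u₀·∂u₀/∂x and ∂u₁/∂t = u₀·∂u₁/∂x + u₁·∂u₀/∂x + ∂³u₀/∂x³ at every point of Ω; that is, u = u₀ + ε u₁ solves the KdV equation u_t = u u_x + ε u_xxx up to terms of order ε². -/
open Real Filter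

lemma myA1 {s : ℝ} (hs : 0 < s) (c : ℝ) (k : ℕ) (h : c = k / 2) :
    s ^ c = Real.sqrt s ^ k := by
  rw [h, Real.sqrt_eq_rpow, ← Real.rpow_natCast (s ^ ((1:ℝ)/2)) k, ← Real.rpow_mul hs.le]
  congr 1
  ring

lemma myA2 {s : ℝ} (hs : 0 < s) (c : ℝ) (k : ℕ) (h : c = -((k : ℝ) / 2)) :
    s ^ c = (Real.sqrt s ^ k)⁻¹ := by
  rw [h, Real.rpow_neg hs.le, myA1 hs _ k rfl]

lemma hasDerivAt_rpow_comp {f : ℝ → ℝ} {f' z : ℝ} (hf : HasDerivAt f f' z)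
    (hpos : 0 < f z) (p : ℝ) :
    HasDerivAt (fun y => f y ^ p) (p * f z ^ (p - 1) * f') z :=
  (Real.hasDerivAt_rpow_const (Or.inl hpos.ne')).comp z hf

/-- With `s = t² + t - x`, the pair `u₀ = 2√s - 2t - 1`,
`u₁ = (1/4) s⁻² + (-2At + B) + (At² - Bt + C) s^{-1/2} + A s^{1/2}`
solves the KdV equation `u_t = u u_x + ε u_xxx` up to terms of order `ε²` on `{s > 0}`:
`∂u₀/∂t = u₀ ∂u₀/∂x` and `∂u₁/∂t = u₀ ∂u₁/∂x + u₁ ∂u₀/∂x + ∂³u₀/∂x³`. -/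
theorem stmt18 (A B C : ℝ) :
    let u₀ : ℝ → ℝ → ℝ := fun t x => 2 * Real.sqrt (t ^ 2 + t - x) - 2 * t - 1
    let u₁ : ℝ → ℝ → ℝ := fun t x =>
      1 / 4 * (t ^ 2 + t - x) ^ (-2 : ℝ) + (-2 * A * t + B)
        + (A * t ^ 2 - B * t + C) * (t ^ 2 + t - x) ^ (-(1 / 2) : ℝ)
        + A * (t ^ 2 + t - x) ^ ((1 / 2) : ℝ)
    ∀ t x : ℝ, t ^ 2 + t - x > 0 →
      ptderiv u₀ t x = u₀ t x * pxderiv u₀ t x ∧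
      ptderiv u₁ t x
        = u₀ t x * pxderiv u₁ t x + u₁ t x * pxderiv u₀ t x
          + pxderiv (pxderiv (pxderiv u₀)) t x := by
  intro u₀ u₁ t x hs
  have hr : 0 < Real.sqrt (t ^ 2 + t - x) := Real.sqrt_pos.mpr hs
  have hrne : Real.sqrt (t ^ 2 + t - x) ≠ 0 := hr.ne'
  have hx : x < t ^ 2 + t := by linarith
  have ht : HasDerivAt (fun τ : ℝ => τ ^ 2 + τ - x) (2 * t + 1) t := by
    have := ((hasDerivAt_pow 2 t).add (hasDerivAt_id t)).sub_const x
    refine this.congr_deriv ?_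
    norm_num
  have hx1 : ∀ y : ℝ, HasDerivAt (fun z : ℝ => t ^ 2 + t - z) (-1 : ℝ) y := by
    intro y
    simpa using (hasDerivAt_id y).const_sub (t ^ 2 + t)
  -- ∂u₀/∂t
  have e1 : ptderiv u₀ t x = (2 * t + 1) / Real.sqrt (t ^ 2 + t - x) - 2 := by
    simp only [ptderiv, u₀]
    have hsq : HasDerivAt (fun τ : ℝ => Real.sqrt (τ ^ 2 + τ - x))
        (1 / (2 * Real.sqrt (t ^ 2 + t - x)) * (2 * t + 1)) t :=
      (Real.hasDerivAt_sqrt hs.ne').comp t ht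
    have H : HasDerivAt (fun τ : ℝ => 2 * Real.sqrt (τ ^ 2 + τ - x) - 2 * τ - 1)
        (2 * (1 / (2 * Real.sqrt (t ^ 2 + t - x)) * (2 * t + 1)) - 2 * 1) t :=
      ((hsq.const_mul 2).sub ((hasDerivAt_id t).const_mul 2)).sub_const 1
    rw [H.deriv]
    field_simp
  -- ∂u₀/∂x, valid on a neighborhood
  have h1 : ∀ y : ℝ, y < t ^ 2 + t →
      pxderiv u₀ t y = -((t ^ 2 + t - y) ^ (-(1 / 2) : ℝ)) := by
    intro y hy
    have hsy : (0 : ℝ) < t ^ 2 + t - y := sub_pos.mpr hy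
    have hry : Real.sqrt (t ^ 2 + t - y) ≠ 0 := (Real.sqrt_pos.mpr hsy).ne'
    simp only [pxderiv, u₀]
    have hsq : HasDerivAt (fun z : ℝ => Real.sqrt (t ^ 2 + t - z))
        (1 / (2 * Real.sqrt (t ^ 2 + t - y)) * (-1)) y :=
      (Real.hasDerivAt_sqrt hsy.ne').comp y (hx1 y)
    have H : HasDerivAt (fun z : ℝ => 2 * Real.sqrt (t ^ 2 + t - z) - 2 * t - 1)
        (2 * (1 / (2 * Real.sqrt (t ^ 2 + t - y)) * (-1))) y :=
      ((hsq.const_mul 2).sub_const (2 * t)).sub_const 1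
    rw [H.deriv, myA2 hsy (-(1 / 2) : ℝ) 1 (by norm_num)]
    field_simp
  -- ∂²u₀/∂x², valid on a neighborhood
  have h2 : ∀ y : ℝ, y < t ^ 2 + t →
      pxderiv (pxderiv u₀) t y = -(1 / 2) * ((t ^ 2 + t - y) ^ (-(3 / 2) : ℝ)) := by
    intro y hy
    have hsy : (0 : ℝ) < t ^ 2 + t - y := sub_pos.mpr hy
    have hev : (fun z => pxderiv u₀ t z)
        =ᶠ[nhds y] (fun z => -((t ^ 2 + t - z) ^ (-(1 / 2) : ℝ))) :=
      Filter.eventually_of_mem (Iio_mem_nhds hy) (fun z hz => h1 z hz)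
    have H : HasDerivAt (fun z : ℝ => -((t ^ 2 + t - z) ^ (-(1 / 2) : ℝ)))
        (-(-(1 / 2) * (t ^ 2 + t - y) ^ ((-(1 / 2) : ℝ) - 1) * (-1))) y :=
      (hasDerivAt_rpow_comp (hx1 y) hsy (-(1 / 2))).neg
    have step : pxderiv (pxderiv u₀) t y
        = deriv (fun z => -((t ^ 2 + t - z) ^ (-(1 / 2) : ℝ))) y := hev.deriv_eq
    rw [step, H.deriv, show ((-(1 / 2) : ℝ) - 1) = (-(3 / 2) : ℝ) by norm_num]
    ring
  -- ∂³u₀/∂x³ at (t,x)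
  have h3 : pxderiv (pxderiv (pxderiv u₀)) t x
      = -(3 / 4) / Real.sqrt (t ^ 2 + t - x) ^ 5 := by
    have hev : (fun z => pxderiv (pxderiv u₀) t z)
        =ᶠ[nhds x] (fun z => -(1 / 2) * ((t ^ 2 + t - z) ^ (-(3 / 2) : ℝ))) :=
      Filter.eventually_of_mem (Iio_mem_nhds hx) (fun z hz => h2 z hz)
    have H : HasDerivAt (fun z : ℝ => -(1 / 2) * ((t ^ 2 + t - z) ^ (-(3 / 2) : ℝ)))
        (-(1 / 2) * (-(3 / 2) * (t ^ 2 + t - x) ^ ((-(3 / 2) : ℝ) - 1) * (-1))) x :=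
      (hasDerivAt_rpow_comp (hx1 x) hs (-(3 / 2))).const_mul (-(1 / 2))
    have step : pxderiv (pxderiv (pxderiv u₀)) t x
        = deriv (fun z => -(1 / 2) * ((t ^ 2 + t - z) ^ (-(3 / 2) : ℝ))) x := hev.deriv_eq
    rw [step, H.deriv, myA2 hs ((-(3 / 2) : ℝ) - 1) 5 (by norm_num)]
    field_simp
    ring
  -- ∂u₁/∂t
  have e3 : ptderiv u₁ t x
      = -(1 / 2) * (2 * t + 1) / Real.sqrt (t ^ 2 + t - x) ^ 6 - 2 * A
        + (2 * A * t - B) / Real.sqrt (t ^ 2 + t - x)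
        + (A * t ^ 2 - B * t + C) * (-(1 / 2)) * (2 * t + 1) / Real.sqrt (t ^ 2 + t - x) ^ 3
        + A * (1 / 2) * (2 * t + 1) / Real.sqrt (t ^ 2 + t - x) := by
    simp only [ptderiv, u₁]
    have hP : HasDerivAt (fun τ : ℝ => A * τ ^ 2 - B * τ + C) (2 * A * t - B) t := by
      have := (((hasDerivAt_pow 2 t).const_mul A).sub
        ((hasDerivAt_id t).const_mul B)).add_const C
      refine this.congr_deriv ?_
      push_cast
      ring
    have H : HasDerivAt (fun τ : ℝ =>
        1 / 4 * (τ ^ 2 + τ - x) ^ (-2 : ℝ) + (-2 * A * τ + B)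
          + (A * τ ^ 2 - B * τ + C) * (τ ^ 2 + τ - x) ^ (-(1 / 2) : ℝ)
          + A * (τ ^ 2 + τ - x) ^ ((1 / 2) : ℝ))
        (1 / 4 * (-2 * (t ^ 2 + t - x) ^ ((-2 : ℝ) - 1) * (2 * t + 1)) + (-2 * A * 1)
          + ((2 * A * t - B) * (t ^ 2 + t - x) ^ (-(1 / 2) : ℝ)
            + (A * t ^ 2 - B * t + C)
              * (-(1 / 2) * (t ^ 2 + t - x) ^ ((-(1 / 2) : ℝ) - 1) * (2 * t + 1)))
          + A * (1 / 2 * (t ^ 2 + t - x) ^ (((1 / 2) : ℝ) - 1) * (2 * t + 1))) t :=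
      ((((hasDerivAt_rpow_comp ht hs (-2)).const_mul (1 / 4)).add
          (((hasDerivAt_id t).const_mul (-2 * A)).add_const B)).add
        (hP.mul (hasDerivAt_rpow_comp ht hs (-(1 / 2))))).add
        ((hasDerivAt_rpow_comp ht hs ((1 / 2))).const_mul A)
    rw [H.deriv, myA2 hs ((-2 : ℝ) - 1) 6 (by norm_num),
      myA2 hs (-(1 / 2) : ℝ) 1 (by norm_num),
      myA2 hs ((-(1 / 2) : ℝ) - 1) 3 (by norm_num),
      myA2 hs (((1 / 2) : ℝ) - 1) 1 (by norm_num)]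
    generalize Real.sqrt (t ^ 2 + t - x) = R at hrne ⊢
    field_simp
    ring
  -- ∂u₁/∂x
  have e4 : pxderiv u₁ t x
      = (1 / 2) / Real.sqrt (t ^ 2 + t - x) ^ 6
        + (A * t ^ 2 - B * t + C) * (1 / 2) / Real.sqrt (t ^ 2 + t - x) ^ 3
        - A * (1 / 2) / Real.sqrt (t ^ 2 + t - x) := by
    simp only [pxderiv, u₁]
    have H : HasDerivAt (fun z : ℝ =>
        1 / 4 * (t ^ 2 + t - z) ^ (-2 : ℝ) + (-2 * A * t + B)
          + (A * t ^ 2 - B * t + C) * (t ^ 2 + t - z) ^ (-(1 / 2) : ℝ)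
          + A * (t ^ 2 + t - z) ^ ((1 / 2) : ℝ))
        (1 / 4 * (-2 * (t ^ 2 + t - x) ^ ((-2 : ℝ) - 1) * (-1)) + 0
          + (0 * (t ^ 2 + t - x) ^ (-(1 / 2) : ℝ)
            + (A * t ^ 2 - B * t + C)
              * (-(1 / 2) * (t ^ 2 + t - x) ^ ((-(1 / 2) : ℝ) - 1) * (-1)))
          + A * (1 / 2 * (t ^ 2 + t - x) ^ (((1 / 2) : ℝ) - 1) * (-1))) x :=
      ((((hasDerivAt_rpow_comp (hx1 x) hs (-2)).const_mul (1 / 4)).add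
          (hasDerivAt_const x (-2 * A * t + B))).add
        ((hasDerivAt_const x (A * t ^ 2 - B * t + C)).mul
          (hasDerivAt_rpow_comp (hx1 x) hs (-(1 / 2))))).add
        ((hasDerivAt_rpow_comp (hx1 x) hs ((1 / 2))).const_mul A)
    rw [H.deriv, myA2 hs ((-2 : ℝ) - 1) 6 (by norm_num),
      myA2 hs (-(1 / 2) : ℝ) 1 (by norm_num),
      myA2 hs ((-(1 / 2) : ℝ) - 1) 3 (by norm_num),
      myA2 hs (((1 / 2) : ℝ) - 1) 1 (by norm_num)]
    generalize Real.sqrt (t ^ 2 + t - x) = R at hrne ⊢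
    field_simp
    ring
  constructor
  · rw [e1, h1 x hx, myA2 hs (-(1 / 2) : ℝ) 1 (by norm_num)]
    simp only [u₀]
    generalize Real.sqrt (t ^ 2 + t - x) = R at hrne ⊢
    field_simp
    ring
  · rw [e3, e4, h1 x hx, h3, myA2 hs (-(1 / 2) : ℝ) 1 (by norm_num)]
    simp only [u₀, u₁]
    rw [myA2 hs (-2 : ℝ) 4 (by norm_num), myA2 hs (-(1 / 2) : ℝ) 1 (by norm_num),
      myA1 hs ((1 / 2) : ℝ) 1 (by norm_num)]
    generalize Real.sqrt (t ^ 2 + t - x) = R at hrne ⊢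
    field_simp
    ring
end

section
/- Let A, B, C be real constants. Define, on the open set Ω = {(t,x) ∈ ℝ² : s > 0} where s = t² + t − x, the functions u₀(t,x) = 2√s − 2t − 1 and u₁(t,x) = −(9/128)·s^{−9/2} + (−2At + B) + (At² − Bt + C)·s^{−1/2} + A·s^{1/2}. Then ∂u₀/∂t = u₀·∂u₀/∂x and ∂u₁/∂t = u₀·∂u₁/∂x + u₁·∂u₀/∂x + (∂³u₀/∂x³)² at every point of Ω; that is, u = u₀ + ε u₁ solves the nonintegrable equation u_t = u u_x + ε (u_xxx)² up to terms of order ε². -/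
/-- With `s = t² + t - x`, the pair `u₀ = 2√s - 2t - 1`,
`u₁ = -(9/128) s^{-9/2} + (-2At + B) + (At² - Bt + C) s^{-1/2} + A s^{1/2}`
solves the nonintegrable equation `u_t = u u_x + ε (u_xxx)²` up to terms of order `ε²`
on `{s > 0}`: `∂u₀/∂t = u₀ ∂u₀/∂x` and
`∂u₁/∂t = u₀ ∂u₁/∂x + u₁ ∂u₀/∂x + (∂³u₀/∂x³)²`. -/
theorem stmt19 (A B C : ℝ) :
    let u₀ : ℝ → ℝ → ℝ := fun t x => 2 * Real.sqrt (t ^ 2 + t - x) - 2 * t - 1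
    let u₁ : ℝ → ℝ → ℝ := fun t x =>
      -(9 / 128) * (t ^ 2 + t - x) ^ (-(9 / 2) : ℝ) + (-2 * A * t + B)
        + (A * t ^ 2 - B * t + C) * (t ^ 2 + t - x) ^ (-(1 / 2) : ℝ)
        + A * (t ^ 2 + t - x) ^ ((1 / 2) : ℝ)
    ∀ t x : ℝ, t ^ 2 + t - x > 0 →
      ptderiv u₀ t x = u₀ t x * pxderiv u₀ t x ∧
      ptderiv u₁ t x
        = u₀ t x * pxderiv u₁ t x + u₁ t x * pxderiv u₀ t x
          + (pxderiv (pxderiv (pxderiv u₀)) t x) ^ 2 := by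
  intro u₀ u₁ t x h
  have hdx : ∀ (p : ℝ) (y : ℝ), 0 < t ^ 2 + t - y →
      HasDerivAt (fun z : ℝ => (t ^ 2 + t - z) ^ p)
        (p * (t ^ 2 + t - y) ^ (p - 1) * (-1)) y := fun p y hy =>
    (Real.hasDerivAt_rpow_const (Or.inl hy.ne')).comp y
      (by simpa using (hasDerivAt_id y).const_sub (t ^ 2 + t))
  have hst : HasDerivAt (fun τ : ℝ => τ ^ 2 + τ - x) (2 * t + 1) t := by
    simpa using ((hasDerivAt_pow 2 t).add (hasDerivAt_id t)).sub_const x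
  have hdt : ∀ p : ℝ, HasDerivAt (fun τ : ℝ => (τ ^ 2 + τ - x) ^ p)
      (p * (t ^ 2 + t - x) ^ (p - 1) * (2 * t + 1)) t := fun p =>
    by
      have hc := (Real.hasDerivAt_rpow_const (p := p) (Or.inl h.ne')).comp t hst
      exact hc
  have hev : ∀ y : ℝ, 0 < t ^ 2 + t - y → ∀ᶠ z in nhds y, 0 < t ^ 2 + t - z := by
    intro y hy
    filter_upwards [Iio_mem_nhds (show y < t ^ 2 + t by linarith)] with z hz
    exact sub_pos.2 hz
  -- first x-derivative of u₀
  have d1 : ∀ y : ℝ, 0 < t ^ 2 + t - y →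
      pxderiv u₀ t y = -(t ^ 2 + t - y) ^ (-(1 / 2) : ℝ) := by
    intro y hy
    have hfun : (fun z : ℝ => u₀ t z)
        = fun z : ℝ => 2 * (t ^ 2 + t - z) ^ ((1 / 2) : ℝ) - 2 * t - 1 := by
      funext z; simp only [u₀]; rw [Real.sqrt_eq_rpow]
    show deriv (fun z : ℝ => u₀ t z) y = _
    rw [hfun]
    have hD := (((hdx (1 / 2) y hy).const_mul 2).sub_const (2 * t)).sub_const 1
    refine hD.deriv.trans ?_
    rw [show ((1 / 2 : ℝ) - 1) = -(1 / 2) by norm_num]; ring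
  have d2 : ∀ y : ℝ, 0 < t ^ 2 + t - y →
      pxderiv (pxderiv u₀) t y = -(1 / 2) * (t ^ 2 + t - y) ^ (-(3 / 2) : ℝ) := by
    intro y hy
    have heq : (fun z : ℝ => pxderiv u₀ t z) =ᶠ[nhds y]
        (fun z : ℝ => -(t ^ 2 + t - z) ^ (-(1 / 2) : ℝ)) := by
      filter_upwards [hev y hy] with z hz using d1 z hz
    show deriv (fun z : ℝ => pxderiv u₀ t z) y = _
    rw [heq.deriv_eq]
    have hD := (hdx (-(1 / 2)) y hy).neg
    refine hD.deriv.trans ?_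
    rw [show ((-(1 / 2) : ℝ) - 1) = -(3 / 2) by norm_num]; ring
  have d3 : ∀ y : ℝ, 0 < t ^ 2 + t - y →
      pxderiv (pxderiv (pxderiv u₀)) t y = -(3 / 4) * (t ^ 2 + t - y) ^ (-(5 / 2) : ℝ) := by
    intro y hy
    have heq : (fun z : ℝ => pxderiv (pxderiv u₀) t z) =ᶠ[nhds y]
        (fun z : ℝ => -(1 / 2) * (t ^ 2 + t - z) ^ (-(3 / 2) : ℝ)) := by
      filter_upwards [hev y hy] with z hz using d2 z hz
    show deriv (fun z : ℝ => pxderiv (pxderiv u₀) t z) y = _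
    rw [heq.deriv_eq]
    have hD := (hdx (-(3 / 2)) y hy).const_mul (-(1 / 2) : ℝ)
    refine hD.deriv.trans ?_
    rw [show ((-(3 / 2) : ℝ) - 1) = -(5 / 2) by norm_num]; ring
  -- t-derivative of u₀
  have Dt0 : ptderiv u₀ t x = (2 * t + 1) * (t ^ 2 + t - x) ^ (-(1 / 2) : ℝ) - 2 := by
    have hfun : (fun τ : ℝ => u₀ τ x)
        = fun τ : ℝ => 2 * (τ ^ 2 + τ - x) ^ ((1 / 2) : ℝ) - 2 * τ - 1 := by
      funext τ; simp only [u₀]; rw [Real.sqrt_eq_rpow]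
    show deriv (fun τ : ℝ => u₀ τ x) t = _
    rw [hfun]
    have hD := (((hdt (1 / 2)).const_mul 2).sub ((hasDerivAt_id t).const_mul 2)).sub_const 1
    refine hD.deriv.trans ?_
    rw [show ((1 / 2 : ℝ) - 1) = -(1 / 2) by norm_num]; ring
  -- t-derivative of u₁
  have hpoly : HasDerivAt (fun τ : ℝ => A * τ ^ 2 - B * τ + C) (A * (2 * t) - B) t := by
    simpa using (((hasDerivAt_pow 2 t).const_mul A).sub ((hasDerivAt_id t).const_mul B)).add_const C
  have h2 : HasDerivAt (fun τ : ℝ => -2 * A * τ + B) (-2 * A) t := by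
    simpa using ((hasDerivAt_id t).const_mul (-2 * A)).add_const B
  have Dt1 : ptderiv u₁ t x
      = (81 / 256) * (2 * t + 1) * (t ^ 2 + t - x) ^ (-(11 / 2) : ℝ) - 2 * A
        + (2 * A * t - B) * (t ^ 2 + t - x) ^ (-(1 / 2) : ℝ)
        - (1 / 2) * (A * t ^ 2 - B * t + C) * (2 * t + 1) * (t ^ 2 + t - x) ^ (-(3 / 2) : ℝ)
        + (A / 2) * (2 * t + 1) * (t ^ 2 + t - x) ^ (-(1 / 2) : ℝ) := by
    show deriv (fun τ : ℝ => u₁ τ x) t = _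
    have hD := ((((hdt (-(9 / 2))).const_mul (-(9 / 128) : ℝ)).add h2).add
      (hpoly.mul (hdt (-(1 / 2))))).add ((hdt (1 / 2)).const_mul A)
    refine hD.deriv.trans ?_
    rw [show ((-(9 / 2) : ℝ) - 1) = -(11 / 2) by norm_num,
      show ((-(1 / 2) : ℝ) - 1) = -(3 / 2) by norm_num,
      show ((1 / 2 : ℝ) - 1) = -(1 / 2) by norm_num]
    ring
  -- x-derivative of u₁
  have Dx1 : pxderiv u₁ t x
      = -(81 / 256) * (t ^ 2 + t - x) ^ (-(11 / 2) : ℝ)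
        + (1 / 2) * (A * t ^ 2 - B * t + C) * (t ^ 2 + t - x) ^ (-(3 / 2) : ℝ)
        - (A / 2) * (t ^ 2 + t - x) ^ (-(1 / 2) : ℝ) := by
    show deriv (fun z : ℝ => u₁ t z) x = _
    have hD := ((((hdx (-(9 / 2)) x h).const_mul (-(9 / 128) : ℝ)).add_const
      (-2 * A * t + B)).add ((hdx (-(1 / 2)) x h).const_mul (A * t ^ 2 - B * t + C))).add
      ((hdx (1 / 2) x h).const_mul A)
    refine hD.deriv.trans ?_
    rw [show ((-(9 / 2) : ℝ) - 1) = -(11 / 2) by norm_num,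
      show ((-(1 / 2) : ℝ) - 1) = -(3 / 2) by norm_num,
      show ((1 / 2 : ℝ) - 1) = -(1 / 2) by norm_num]
    ring
  -- algebraic identities in r = √s
  have hr : (0 : ℝ) < Real.sqrt (t ^ 2 + t - x) := Real.sqrt_pos.2 h
  set r := Real.sqrt (t ^ 2 + t - x) with hrdef
  have hrs : t ^ 2 + t - x = r ^ 2 := by rw [hrdef]; exact (Real.sq_sqrt h.le).symm
  have key : ∀ (p : ℝ) (n : ℕ), ((2 : ℕ) : ℝ) * p = -(n : ℝ) →
      (t ^ 2 + t - x) ^ p = (r ^ n)⁻¹ := by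
    intro p n hp
    rw [hrs, ← Real.rpow_natCast r 2, ← Real.rpow_mul hr.le, hp,
      Real.rpow_neg hr.le, Real.rpow_natCast]
  have E1 : (t ^ 2 + t - x) ^ ((1 / 2) : ℝ) = r := by
    rw [hrs, ← Real.rpow_natCast r 2, ← Real.rpow_mul hr.le,
      show ((2 : ℕ) : ℝ) * (1 / 2) = 1 by norm_num, Real.rpow_one]
  have Em1 : (t ^ 2 + t - x) ^ (-(1 / 2) : ℝ) = (r ^ 1)⁻¹ := key _ 1 (by norm_num)
  have Em3 : (t ^ 2 + t - x) ^ (-(3 / 2) : ℝ) = (r ^ 3)⁻¹ := key _ 3 (by norm_num)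
  have Em5 : (t ^ 2 + t - x) ^ (-(5 / 2) : ℝ) = (r ^ 5)⁻¹ := key _ 5 (by norm_num)
  have Em9 : (t ^ 2 + t - x) ^ (-(9 / 2) : ℝ) = (r ^ 9)⁻¹ := key _ 9 (by norm_num)
  have Em11 : (t ^ 2 + t - x) ^ (-(11 / 2) : ℝ) = (r ^ 11)⁻¹ := key _ 11 (by norm_num)
  constructor
  · rw [Dt0, d1 x h]
    simp only [u₀, ← hrdef, Em1]
    field_simp
    ring
  · rw [Dt1, Dx1, d1 x h, d3 x h]
    simp only [u₀, u₁, ← hrdef, E1, Em1, Em3, Em5, Em9, Em11]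
    field_simp
    ring
end
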